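/- The constrained least-squares problem reduces to a weighted least-squares problem: min_{P ∈ 𝒫^{r*}} Σ_{k=1}^{n−m} (f(x''_k) − P(x''_k))² = min_{Q ∈ 𝒫^{r−m−1}} Σ_{k=1}^{n−m} w_k (f̂(x''_k) − Q(x''_k))², and if Q̂ attains the right-hand minimum then P̂ = P_{X'} + Q̂·ω_m attains the left-hand minimum. -/

import Mathlib

/-- The constrained least-squares problem reduces to a weighted
least-squares problem:
`min_{P ∈ 𝒫^{r*}} Σ (f(x''_k) − P(x''_k))² = min_{Q ∈ 𝒫^{r−m−1}} Σ w_k (f̂(x''_k) − Q(x''_k))²`,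
and if `Q̂` attains the right-hand minimum then `P̂ = P_{X'} + Q̂ ω_m` attains the
left-hand minimum. -/
theorem constrained_ls_reduces_to_weighted_ls
    (m n r : ℕ) (hmr : m < r) (hrn : r ≤ n)
    (x' : Fin (m + 1) → ℝ) (x'' : Fin (n - m) → ℝ)
    (hx'mono : StrictMono x') (hx''mono : StrictMono x'')
    (hx'mem : ∀ i, x' i ∈ Set.Icc (-1 : ℝ) 1)
    (hx''mem : ∀ k, x'' k ∈ Set.Icc (-1 : ℝ) 1)
    (hdisj : ∀ i k, x' i ≠ x'' k)
    (f : ℝ → ℝ)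
    (PX' : Polynomial ℝ) (hPX'deg : PX'.degree ≤ (m : ℕ))
    (hPX'interp : ∀ i, PX'.eval (x' i) = f (x' i))
    (ω : Polynomial ℝ)
    (hω : ω = ∏ i : Fin (m + 1), (Polynomial.X - Polynomial.C (x' i)))
    (w : Fin (n - m) → ℝ) (hw : ∀ k, w k = (ω.eval (x'' k)) ^ 2)
    (fhat : Fin (n - m) → ℝ)
    (hfhat : ∀ k, fhat k = (f (x'' k) - PX'.eval (x'' k)) / ω.eval (x'' k)) :
    (sInf {e : ℝ | ∃ P : Polynomial ℝ, P.degree ≤ (r : ℕ) ∧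
          (∀ i, P.eval (x' i) = f (x' i)) ∧
          e = ∑ k : Fin (n - m), (f (x'' k) - P.eval (x'' k)) ^ 2} =
        sInf {e : ℝ | ∃ Q : Polynomial ℝ, Q.degree ≤ (r - m - 1 : ℕ) ∧
          e = ∑ k : Fin (n - m), w k * (fhat k - Q.eval (x'' k)) ^ 2}) ∧
      ∀ Qhat : Polynomial ℝ, Qhat.degree ≤ (r - m - 1 : ℕ) →
        (∀ Q : Polynomial ℝ, Q.degree ≤ (r - m - 1 : ℕ) →
          ∑ k : Fin (n - m), w k * (fhat k - Qhat.eval (x'' k)) ^ 2 ≤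
            ∑ k : Fin (n - m), w k * (fhat k - Q.eval (x'' k)) ^ 2) →
        ((PX' + Qhat * ω).degree ≤ (r : ℕ) ∧
          (∀ i, (PX' + Qhat * ω).eval (x' i) = f (x' i)) ∧
          ∀ P : Polynomial ℝ, P.degree ≤ (r : ℕ) → (∀ i, P.eval (x' i) = f (x' i)) →
            ∑ k : Fin (n - m), (f (x'' k) - (PX' + Qhat * ω).eval (x'' k)) ^ 2 ≤
              ∑ k : Fin (n - m), (f (x'' k) - P.eval (x'' k)) ^ 2) := by
  have hωmonic : ω.Monic := by
    rw [hω]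
    exact Polynomial.monic_prod_of_monic _ _ fun i _ => Polynomial.monic_X_sub_C _
  have hωne0 : ω ≠ 0 := hωmonic.ne_zero
  have hωnatdeg : ω.natDegree = m + 1 := by
    rw [hω, Polynomial.natDegree_prod _ _ fun i _ => Polynomial.X_sub_C_ne_zero _]
    simp [Polynomial.natDegree_X_sub_C]
  have hωdeg : ω.degree = ((m + 1 : ℕ) : WithBot ℕ) := by
    rw [Polynomial.degree_eq_natDegree hωne0, hωnatdeg]
  have hωroot : ∀ i, ω.eval (x' i) = 0 := by
    intro i
    rw [hω, Polynomial.eval_prod]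
    exact Finset.prod_eq_zero (Finset.mem_univ i) (by simp)
  have hωne : ∀ k, ω.eval (x'' k) ≠ 0 := by
    intro k
    rw [hω, Polynomial.eval_prod]
    refine Finset.prod_ne_zero_iff.mpr fun i _ => ?_
    simp only [Polynomial.eval_sub, Polynomial.eval_X, Polynomial.eval_C]
    exact sub_ne_zero.mpr (Ne.symm (hdisj i k))
  -- pointwise identity
  have key : ∀ (Q : Polynomial ℝ) (k : Fin (n - m)),
      (f (x'' k) - (PX' + Q * ω).eval (x'' k)) ^ 2
        = w k * (fhat k - Q.eval (x'' k)) ^ 2 := by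
    intro Q k
    have h := hωne k
    rw [hw, hfhat]
    simp only [Polynomial.eval_add, Polynomial.eval_mul]
    field_simp
    ring
  -- degree of PX' + Q*ω
  have hdegP : ∀ Q : Polynomial ℝ, Q.degree ≤ ((r - m - 1 : ℕ) : WithBot ℕ) →
      (PX' + Q * ω).degree ≤ ((r : ℕ) : WithBot ℕ) := by
    intro Q hQ
    refine (Polynomial.degree_add_le _ _).trans (max_le (hPX'deg.trans ?_) ?_)
    · exact_mod_cast Nat.cast_le.mpr hmr.le
    · refine (Polynomial.degree_mul_le _ _).trans ?_
      rw [hωdeg]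
      calc Q.degree + ((m + 1 : ℕ) : WithBot ℕ)
          ≤ ((r - m - 1 : ℕ) : WithBot ℕ) + ((m + 1 : ℕ) : WithBot ℕ) :=
            add_le_add hQ le_rfl
        _ = ((r : ℕ) : WithBot ℕ) := by
            rw [← Nat.cast_add]
            congr 1
            omega
  -- interpolation of PX' + Q*ω
  have hinterpP : ∀ (Q : Polynomial ℝ) (i : Fin (m + 1)),
      (PX' + Q * ω).eval (x' i) = f (x' i) := by
    intro Q i
    simp [hωroot i, hPX'interp i]
  -- forward construction
  have toQ : ∀ P : Polynomial ℝ, P.degree ≤ ((r : ℕ) : WithBot ℕ) →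
      (∀ i, P.eval (x' i) = f (x' i)) →
      ∃ Q : Polynomial ℝ, Q.degree ≤ ((r - m - 1 : ℕ) : WithBot ℕ) ∧
        P = PX' + Q * ω := by
    intro P hPdeg hPinterp
    have hdvd : ω ∣ P - PX' := by
      rw [hω]
      refine Fintype.prod_dvd_of_coprime
        (Polynomial.pairwise_coprime_X_sub_C hx'mono.injective) fun i => ?_
      refine Polynomial.dvd_iff_isRoot.mpr ?_
      simp [Polynomial.IsRoot, hPinterp i, hPX'interp i]
    obtain ⟨Q, hQ⟩ := hdvd
    refine ⟨Q, ?_, by linear_combination hQ⟩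
    rcases eq_or_ne Q 0 with rfl | hQ0
    · simp
    have hD0 : P - PX' ≠ 0 := by
      rw [hQ]
      exact mul_ne_zero hωne0 hQ0
    have hDdeg : (P - PX').degree ≤ ((r : ℕ) : WithBot ℕ) :=
      (Polynomial.degree_sub_le _ _).trans
        (max_le hPdeg (hPX'deg.trans (by exact_mod_cast Nat.cast_le.mpr hmr.le)))
    have hDnat : (P - PX').natDegree ≤ r :=
      Polynomial.natDegree_le_iff_degree_le.mpr hDdeg
    have hnat : Q.natDegree + (m + 1) ≤ r := by
      have := Polynomial.natDegree_mul hωne0 hQ0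
      rw [hQ, this, hωnatdeg] at hDnat
      omega
    exact Polynomial.natDegree_le_iff_degree_le.mp (by omega)
  refine ⟨?_, ?_⟩
  · -- equality of the two infima: the two sets are equal
    congr 1
    ext e
    constructor
    · rintro ⟨P, hPdeg, hPinterp, rfl⟩
      obtain ⟨Q, hQdeg, hPeq⟩ := toQ P hPdeg hPinterp
      refine ⟨Q, hQdeg, ?_⟩
      refine Finset.sum_congr rfl fun k _ => ?_
      rw [hPeq]
      exact key Q k
    · rintro ⟨Q, hQdeg, rfl⟩
      refine ⟨PX' + Q * ω, hdegP Q hQdeg, hinterpP Q, ?_⟩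
      exact Finset.sum_congr rfl fun k _ => (key Q k).symm
  · intro Qhat hQhatdeg hmin
    refine ⟨hdegP Qhat hQhatdeg, hinterpP Qhat, ?_⟩
    intro P hPdeg hPinterp
    obtain ⟨Q, hQdeg, hPeq⟩ := toQ P hPdeg hPinterp
    calc ∑ k : Fin (n - m), (f (x'' k) - (PX' + Qhat * ω).eval (x'' k)) ^ 2
        = ∑ k : Fin (n - m), w k * (fhat k - Qhat.eval (x'' k)) ^ 2 :=
          Finset.sum_congr rfl fun k _ => key Qhat k
      _ ≤ ∑ k : Fin (n - m), w k * (fhat k - Q.eval (x'' k)) ^ 2 := hmin Q hQdeg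
      _ = ∑ k : Fin (n - m), (f (x'' k) - P.eval (x'' k)) ^ 2 := by
          refine Finset.sum_congr rfl fun k _ => ?_
          rw [hPeq]
          exact (key Q k).symm
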